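/- Let Σ_A and Σ_B be disjoint finite alphabets and Σ = Σ_A ∪ Σ_B. Call words w1, w2 ∈ Σ* inconsistent if w1 = w·a·w1′ and w2 = w·b·w2′ for some w, w1′, w2′ ∈ Σ* and distinct letters a, b ∈ Σ_A, and consistent otherwise; a set X ⊆ Σ* is consistent if every pair of words in X is consistent. Let ≤ be the partial order on Σ consisting of an arbitrary linear order on Σ_A, with every element of Σ_B incomparable to every other letter. Then X ⊆ Σ* is consistent if and only if X is a quasiantichain with respect to the lexicographic order induced by ≤. -/
import Mathlib


open Filter
open scoped ENNReal

/-- The lexicographic partial order on words induced by a strict order `r` on letters: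
`ε R w` for all `w`, and `(x :: w) R (y :: w')` iff `r x y`, or `x = y` and `w R w'`. -/
inductive LexR {α : Type*} (r : α → α → Prop) : List α → List α → Prop
  | nil (w : List α) : LexR r [] w
  | head {x y : α} (w w' : List α) (h : r x y) : LexR r (x :: w) (y :: w')
  | cons (x : α) {w w' : List α} (h : LexR r w w') : LexR r (x :: w) (x :: w')

/-- Two words are comparable (`u ∼ v`) if `u R v` or `v R u`. -/
def LexComp {α : Type*} (r : α → α → Prop) (u v : List α) : Prop :=
  LexR r u v ∨ LexR r v u

/-- A language is an antichain if any two distinct words of it are incomparable. -/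
def IsAntichainLang {α : Type*} (r : α → α → Prop) (L : Set (List α)) : Prop :=
  ∀ u ∈ L, ∀ v ∈ L, u ≠ v → ¬ LexComp r u v

/-- A language is a quasiantichain if any two words of it are incomparable or one is a
prefix of the other. -/
def IsQuasiantichainLang {α : Type*} (r : α → α → Prop) (L : Set (List α)) : Prop :=
  ∀ u ∈ L, ∀ v ∈ L, u <+: v ∨ v <+: u ∨ ¬ LexComp r u v

/-- A language is a chain if any two words of it are comparable. -/
def IsChainLang {α : Type*} (r : α → α → Prop) (L : Set (List α)) : Prop :=
  ∀ u ∈ L, ∀ v ∈ L, LexComp r u v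

/-- `|L|_{=n}`: the number of words of length `n` in `L`. -/
noncomputable def countLen {α : Type*} (L : Set (List α)) (n : ℕ) : ℕ :=
  {w ∈ L | w.length = n}.ncard

/-- `L` has exponential growth of order `ε` if `limsup |L|_{=n} / 2^(εn) > 0`. -/
def ExpGrowthOrder {α : Type*} (L : Set (List α)) (ε : ℝ) : Prop :=
  0 < Filter.limsup (fun n : ℕ => (countLen L n : ℝ≥0∞) / (2 : ℝ≥0∞) ^ (ε * n)) Filter.atTop

/-- `L` has exponential growth if it has exponential growth of some order `ε > 0`. -/
def ExpGrowth {α : Type*} (L : Set (List α)) : Prop :=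
  ∃ ε : ℝ, 0 < ε ∧ ExpGrowthOrder L ε

/-- `L` has polynomial growth if `limsup |L|_{=n} / n^k < ∞` for some `k`. -/
def PolyGrowth {α : Type*} (L : Set (List α)) : Prop :=
  ∃ k : ℕ, Filter.limsup (fun n : ℕ => (countLen L n : ℝ≥0∞) / (n : ℝ≥0∞) ^ k) Filter.atTop < ⊤

/-- `L` is an antichain family if the set of words of length `n` in `L` is an antichain
for every `n`. -/
def AntichainFamily {α : Type*} (r : α → α → Prop) (L : Set (List α)) : Prop :=
  ∀ n : ℕ, IsAntichainLang r {w ∈ L | w.length = n}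

/-- `L` has exponential antichain growth if some subset of `L` is an antichain family
with exponential growth. -/
def ExpAntichainGrowth {α : Type*} (r : α → α → Prop) (L : Set (List α)) : Prop :=
  ∃ L' ⊆ L, AntichainFamily r L' ∧ ExpGrowth L'

/-- `L` has polynomial antichain growth if every antichain family contained in `L`
has polynomial growth. -/
def PolyAntichainGrowth {α : Type*} (r : α → α → Prop) (L : Set (List α)) : Prop :=
  ∀ L' ⊆ L, AntichainFamily r L' → PolyGrowth L'

/-- The Kleene star of a language: all finite concatenations of words of `L`. -/
def KStarLang {α : Type*} (L : Set (List α)) : Set (List α) :=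
  {w | ∃ S : List (List α), (∀ u ∈ S, u ∈ L) ∧ w = S.flatten}

/-- Two words over `Σ_A ∪ Σ_B` are inconsistent if they first differ on two distinct
letters of `Σ_A`. -/
def Inconsistent {A B : Type*} (w1 w2 : List (A ⊕ B)) : Prop :=
  ∃ (w w1' w2' : List (A ⊕ B)) (a b : A), a ≠ b ∧
    w1 = w ++ Sum.inl a :: w1' ∧ w2 = w ++ Sum.inl b :: w2'

/-- The partial order on `Σ_A ∪ Σ_B`: an arbitrary linear order on `Σ_A`, with every
element of `Σ_B` incomparable to every other letter. -/
def abOrder {A B : Type*} [LinearOrder A] : A ⊕ B → A ⊕ B → Prop :=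
  fun x y =>
    match x, y with
    | Sum.inl a, Sum.inl b => a < b
    | _, _ => False

lemma lexR_structure {α : Type*} {r : α → α → Prop} {u v : List α} (h : LexR r u v) :
    u <+: v ∨ ∃ (w u' v' : List α) (a b : α), r a b ∧ u = w ++ a :: u' ∧ v = w ++ b :: v' := by
  induction h with
  | nil w => exact Or.inl (List.nil_prefix)
  | head w w' hr => exact Or.inr ⟨[], _, _, _, _, hr, rfl, rfl⟩
  | cons x h ih =>
    rcases ih with h | ⟨w, u', v', a, b, hr, rfl, rfl⟩
    · exact Or.inl (List.cons_prefix_cons.2 ⟨rfl, h⟩)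
    · exact Or.inr ⟨x :: w, u', v', a, b, hr, rfl, rfl⟩

lemma lexR_of_prefix {α : Type*} (r : α → α → Prop) {u v : List α} (h : u <+: v) :
    LexR r u v := by
  induction u generalizing v with
  | nil => exact LexR.nil v
  | cons x u ih =>
    obtain ⟨t, rfl⟩ := h
    exact LexR.cons x (ih ⟨t, rfl⟩)

lemma lexR_of_diff {α : Type*} {r : α → α → Prop} (w u' v' : List α) {a b : α}
    (hr : r a b) : LexR r (w ++ a :: u') (w ++ b :: v') := by
  induction w with
  | nil => exact LexR.head _ _ hr
  | cons x w ih => exact LexR.cons x ih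

lemma inconsistent_not_prefix {A B : Type*} {w1 w2 : List (A ⊕ B)}
    (h : Inconsistent w1 w2) : ¬ w1 <+: w2 := by
  obtain ⟨w, u', v', a, b, hab, rfl, rfl⟩ := h
  intro hp
  rw [List.prefix_append_right_inj] at hp
  exact hab (Sum.inl.inj (List.cons_prefix_cons.1 hp).1)

lemma inconsistent_symm {A B : Type*} {w1 w2 : List (A ⊕ B)}
    (h : Inconsistent w1 w2) : Inconsistent w2 w1 := by
  obtain ⟨w, u', v', a, b, hab, rfl, rfl⟩ := h
  exact ⟨w, v', u', b, a, hab.symm, rfl, rfl⟩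

lemma inconsistent_lexComp {A B : Type*} [LinearOrder A] {w1 w2 : List (A ⊕ B)}
    (h : Inconsistent w1 w2) : LexComp abOrder w1 w2 := by
  obtain ⟨w, u', v', a, b, hab, rfl, rfl⟩ := h
  rcases hab.lt_or_gt with hlt | hlt
  · exact Or.inl (lexR_of_diff w u' v' (show abOrder (Sum.inl a) (Sum.inl b) from hlt))
  · exact Or.inr (lexR_of_diff w v' u' (show abOrder (Sum.inl b) (Sum.inl a) from hlt))

lemma inconsistent_of_lexR {A B : Type*} [LinearOrder A] {w1 w2 : List (A ⊕ B)}
    (h : LexR abOrder w1 w2) (hnp : ¬ w1 <+: w2) : Inconsistent w1 w2 := by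
  rcases lexR_structure h with hp | ⟨w, u', v', a, b, hr, rfl, rfl⟩
  · exact absurd hp hnp
  · match a, b, hr with
    | Sum.inl a, Sum.inl b, hr =>
      exact ⟨w, u', v', a, b, ne_of_lt hr, rfl, rfl⟩

/-- A set of words is consistent iff it is a quasiantichain with respect to the
lexicographic order induced by `abOrder`. -/
theorem consistent_iff_quasiantichain {A B : Type*} [Fintype A] [Fintype B]
    [LinearOrder A] (X : Set (List (A ⊕ B))) :
    (∀ w1 ∈ X, ∀ w2 ∈ X, ¬ Inconsistent w1 w2) ↔ IsQuasiantichainLang abOrder X := by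
  constructor
  · intro h u hu v hv
    by_contra hc
    push_neg at hc
    obtain ⟨h1, h2, h3⟩ := hc
    rcases h3 with hl | hl
    · exact h u hu v hv (inconsistent_of_lexR hl h1)
    · exact h u hu v hv (inconsistent_symm (inconsistent_of_lexR hl h2))
  · intro h u hu v hv hinc
    rcases h u hu v hv with hp | hp | hnc
    · exact inconsistent_not_prefix hinc hp
    · exact inconsistent_not_prefix (inconsistent_symm hinc) hp
    · exact hnc (inconsistent_lexComp hinc)
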